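/- arXiv:0803.3642 — 5 statements merged into one kernel-verified Lean document; each statement's English description precedes it below -/
import Mathlib

section
/- Let (S_k)_{k≥0} be the simple unbiased random walk on ℤ started at 0. Then there exists a natural number t_0 (an absolute constant) such that P[for all integers T > t_0, S_T < T/2] > 1 - 1/e. -/
open MeasureTheory ProbabilityTheory Real

-- Step 1: mgf of a single sign variable
lemma sign_mgf_aux {Ω : Type*} [MeasurableSpace Ω] (P : Measure Ω) [IsProbabilityMeasure P]
    (X : Ω → ℝ) (hm : Measurable X) (hp : P {ω | X ω = 1} = 1 / 2)
    (hmn : P {ω | X ω = -1} = 1 / 2) (t : ℝ) :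
    Integrable (fun ω => exp (t * X ω)) P ∧ mgf X P t = (exp t + exp (-t)) / 2 := by
  set A : Set Ω := {ω | X ω = 1} with hA
  set B : Set Ω := {ω | X ω = -1} with hB
  have hAm : MeasurableSet A := hm (measurableSet_singleton 1)
  have hBm : MeasurableSet B := hm (measurableSet_singleton (-1))
  have hdisj : Disjoint A B := by
    rw [Set.disjoint_left]
    intro ω h1 h2
    simp only [hA, hB, Set.mem_setOf_eq] at h1 h2
    norm_num [h1] at h2
  have hunion : P (A ∪ B) = 1 := by
    rw [measure_union hdisj hBm, hp, hmn]
    rw [ENNReal.div_add_div_same]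
    rw [one_add_one_eq_two]
    exact ENNReal.div_self two_ne_zero ENNReal.ofNat_ne_top
  have hae : ∀ᵐ ω ∂P, ω ∈ A ∪ B := by
    rw [Filter.eventually_iff, MeasureTheory.mem_ae_iff]
    have : {ω | ω ∈ A ∪ B}ᶜ = (A ∪ B)ᶜ := rfl
    rw [this, MeasureTheory.prob_compl_eq_zero_iff (hAm.union hBm)]
    exact hunion
  set g : Ω → ℝ := fun ω => A.indicator (fun _ => exp t) ω + B.indicator (fun _ => exp (-t)) ω
    with hg
  have heq : (fun ω => exp (t * X ω)) =ᵐ[P] g := by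
    filter_upwards [hae] with ω hω
    rcases hω with h1 | h2
    · have hnB : ω ∉ B := fun h => hdisj.le_bot ⟨h1, h⟩ 
      simp only [hg, Set.indicator_of_mem h1, Set.indicator_of_notMem hnB]
      have : X ω = 1 := h1
      rw [this]; ring_nf
    · have hnA : ω ∉ A := fun h => hdisj.le_bot ⟨h, h2⟩
      simp only [hg, Set.indicator_of_mem h2, Set.indicator_of_notMem hnA]
      have : X ω = -1 := h2
      rw [this]; ring_nf
  have hgint : Integrable g P :=
    ((integrable_const (exp t)).indicator hAm).add ((integrable_const (exp (-t))).indicator hBm)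
  refine ⟨hgint.congr heq.symm, ?_⟩
  have : mgf X P t = ∫ ω, g ω ∂P := integral_congr_ae heq
  rw [this, hg]
  rw [integral_add ((integrable_const (exp t)).indicator hAm)
    ((integrable_const (exp (-t))).indicator hBm),
    integral_indicator_const _ hAm, integral_indicator_const _ hBm, measureReal_def, measureReal_def, hp, hmn]
  simp [ENNReal.toReal_div]
  ring

-- Step 2: per-T tail bound
lemma tail_bound_aux {Ω : Type*} [MeasurableSpace Ω] (P : Measure Ω) [IsProbabilityMeasure P]
    (ε : ℕ → Ω → ℝ)
    (hmeas : ∀ i, Measurable (ε i))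
    (hindep : iIndepFun ε P)
    (hplus : ∀ i, P {ω | ε i ω = 1} = 1 / 2)
    (hminus : ∀ i, P {ω | ε i ω = -1} = 1 / 2) (T : ℕ) :
    P {ω | (T : ℝ) / 2 ≤ ∑ i ∈ Finset.range T, ε i ω} ≤ ENNReal.ofReal ((8 / 9 : ℝ) ^ T) := by
  set t : ℝ := Real.log 2 with ht
  have hint : ∀ i ∈ Finset.range T, Integrable (fun ω => exp (t * ε i ω)) P :=
    fun i _ => (sign_mgf_aux P (ε i) (hmeas i) (hplus i) (hminus i) t).1
  have hSint : Integrable (fun ω => exp (t * (∑ i ∈ Finset.range T, ε i) ω)) P :=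
    hindep.integrable_exp_mul_sum hmeas hint
  have ht0 : (0:ℝ) ≤ t := Real.log_nonneg (by norm_num)
  have hchern := measure_ge_le_exp_mul_mgf (μ := P) (X := ∑ i ∈ Finset.range T, ε i)
    ((T : ℝ) / 2) ht0 hSint
  have hmgf : mgf (∑ i ∈ Finset.range T, ε i) P t = (5 / 4 : ℝ) ^ T := by
    rw [hindep.mgf_sum hmeas (Finset.range T)]
    have h1 : ∀ i, mgf (ε i) P t = 5 / 4 := by
      intro i
      rw [(sign_mgf_aux P (ε i) (hmeas i) (hplus i) (hminus i) t).2]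
      rw [ht, Real.exp_log (by norm_num), Real.exp_neg, Real.exp_log (by norm_num)]
      norm_num
    simp [h1, div_pow]
  rw [hmgf] at hchern
  have hset : {ω | (T : ℝ) / 2 ≤ ∑ i ∈ Finset.range T, ε i ω}
      = {ω | (T : ℝ) / 2 ≤ (∑ i ∈ Finset.range T, ε i) ω} := by
    ext ω; simp [Finset.sum_apply]
  have hbound : exp (-t * ((T:ℝ) / 2)) * (5 / 4 : ℝ) ^ T ≤ (8 / 9 : ℝ) ^ T := by
    have h2 : exp (-t * ((T:ℝ) / 2)) = exp (-t / 2) ^ T := by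
      rw [← Real.exp_nat_mul]; ring_nf
    rw [h2, ← mul_pow]
    apply pow_le_pow_left₀ (by positivity)
    have ha : (exp (-t / 2) * (5 / 4)) ^ 2 = 25 / 32 := by
      rw [mul_pow, ← Real.exp_nat_mul]
      have : (2:ℕ) * (-t / 2) = -t := by push_cast; ring
      rw [this, ht, Real.exp_neg, Real.exp_log (by norm_num)]
      norm_num
    nlinarith [Real.exp_pos (-t / 2), ha]
  rw [hset]
  calc P {ω | (T : ℝ) / 2 ≤ (∑ i ∈ Finset.range T, ε i) ω}
      = ENNReal.ofReal (P {ω | (T : ℝ) / 2 ≤ (∑ i ∈ Finset.range T, ε i) ω}).toReal := by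
        rw [ENNReal.ofReal_toReal (measure_ne_top _ _)]
    _ ≤ ENNReal.ofReal ((8 / 9 : ℝ) ^ T) :=
        ENNReal.ofReal_le_ofReal (hchern.trans hbound)

/-- For the simple unbiased random walk `S_k = ε_1 + ⋯ + ε_k` built from
i.i.d. signs `ε_i` with `P[ε_i = 1] = P[ε_i = -1] = 1/2`, there is an absolute constant
`t₀ ∈ ℕ` such that `P[∀ T > t₀, S_T < T/2] > 1 - 1/e`. -/
theorem random_walk_eventually_below_half
    {Ω : Type*} [MeasurableSpace Ω] (P : Measure Ω) [IsProbabilityMeasure P]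
    (ε : ℕ → Ω → ℝ)
    (hmeas : ∀ i, Measurable (ε i))
    (hindep : iIndepFun ε P)
    (hplus : ∀ i, P {ω | ε i ω = 1} = 1 / 2)
    (hminus : ∀ i, P {ω | ε i ω = -1} = 1 / 2) :
    ∃ t₀ : ℕ,
      P {ω | ∀ T : ℕ, t₀ < T → (∑ i ∈ Finset.range T, ε i ω) < (T : ℝ) / 2} >
        ENNReal.ofReal (1 - Real.exp (-1)) := by
  refine ⟨30, ?_⟩
  set good : Set Ω := {ω | ∀ T : ℕ, 30 < T → (∑ i ∈ Finset.range T, ε i ω) < (T : ℝ) / 2}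
    with hgood
  set C : ℕ → Set Ω := fun T => {ω | (T : ℝ) / 2 ≤ ∑ i ∈ Finset.range T, ε i ω} with hC
  have hCm : ∀ T, MeasurableSet (C T) :=
    fun T => measurableSet_le measurable_const (Finset.measurable_sum _ fun i _ => hmeas i)
  have hgood_eq : good = (⋃ n : ℕ, C (n + 31))ᶜ := by
    ext ω
    simp only [hgood, hC, Set.mem_setOf_eq, Set.mem_compl_iff, Set.mem_iUnion, not_exists,
      Set.mem_setOf_eq]
    constructor
    · intro h n
      exact not_le.mpr (h (n + 31) (by omega))
    · intro h T hT
      have := h (T - 31)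
      rw [Nat.sub_add_cancel (by omega)] at this
      exact not_le.mp this
  have hbadm : MeasurableSet (⋃ n : ℕ, C (n + 31)) := MeasurableSet.iUnion fun n => hCm _
  have hbad_lt : P (⋃ n : ℕ, C (n + 31)) < ENNReal.ofReal (Real.exp (-1)) := by
    calc P (⋃ n : ℕ, C (n + 31)) ≤ ∑' n : ℕ, P (C (n + 31)) := measure_iUnion_le _
      _ ≤ ∑' n : ℕ, ENNReal.ofReal ((8 / 9 : ℝ) ^ (n + 31)) :=
          ENNReal.tsum_le_tsum fun n =>
            tail_bound_aux P ε hmeas hindep hplus hminus (n + 31)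
      _ = ENNReal.ofReal (∑' n : ℕ, (8 / 9 : ℝ) ^ (n + 31)) :=
          (ENNReal.ofReal_tsum_of_nonneg (fun n => by positivity)
            (by simpa [pow_add] using (summable_geometric_of_lt_one (by norm_num : (0:ℝ) ≤ 8/9)
              (by norm_num)).mul_right ((8/9:ℝ) ^ 31))).symm
      _ < ENNReal.ofReal (Real.exp (-1)) := by
          rw [ENNReal.ofReal_lt_ofReal_iff (Real.exp_pos _)]
          have hsum : ∑' n : ℕ, (8 / 9 : ℝ) ^ (n + 31) = (8/9:ℝ)^31 * 9 := by
            simp_rw [pow_add]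
            rw [tsum_mul_right, tsum_geometric_of_lt_one (by norm_num) (by norm_num)]
            norm_num
          rw [hsum]
          have he : Real.exp 1 < 2.7182818286 := Real.exp_one_lt_d9
          have : (2.7182818286 : ℝ)⁻¹ < Real.exp (-1) := by
            rw [Real.exp_neg]
            exact inv_strictAnti₀ (Real.exp_pos 1) he
          nlinarith [this]
  have hgoodm : MeasurableSet good := hgood_eq ▸ hbadm.compl
  show ENNReal.ofReal (1 - Real.exp (-1)) < P good
  by_contra hcon
  push_neg at hcon
  have hsplit : P good + P (⋃ n : ℕ, C (n + 31)) = 1 := by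
    rw [hgood_eq, add_comm]
    rw [measure_add_measure_compl hbadm, measure_univ]
  have hlt : P good + P (⋃ n : ℕ, C (n + 31))
      < ENNReal.ofReal (1 - Real.exp (-1)) + ENNReal.ofReal (Real.exp (-1)) :=
    ENNReal.add_lt_add_of_le_of_lt (ne_of_lt (lt_of_le_of_lt hcon ENNReal.ofReal_lt_top))
      hcon hbad_lt
  have hexp1 : Real.exp (-1) < 1 := Real.exp_lt_one_iff.mpr (by norm_num)
  rw [hsplit, ← ENNReal.ofReal_add (by linarith) (Real.exp_pos (-1)).le] at hlt
  simp at hlt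
end

section
/- There exists a natural number t_0 (an absolute constant) with the following property: for every real number n ≥ 2 and every sequence (X_i)_{i≥1} of i.i.d. real-valued random variables satisfying X_i ≤ log n almost surely and P[X_i ≥ -(3/2)·log n] ≤ 1/2, one has P[there exists an integer k > t_0 with X_1 + ... + X_k > -2] ≤ 1/e. In particular, t_0 does not depend on n or on the common distribution of the X_i. -/
open MeasureTheory ProbabilityTheory

/-- There is an absolute constant `t₀ ∈ ℕ` such that: for every real
`n ≥ 2` and every i.i.d. sequence `(X_i)` with `X_i ≤ log n` almost surely and
`P[X_i ≥ -(3/2) log n] ≤ 1/2`, we have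
`P[∃ k > t₀, X_1 + ⋯ + X_k > -2] ≤ 1/e`. -/
theorem random_walk_stays_negative_uniform :
    ∃ t₀ : ℕ, ∀ (n : ℝ), 2 ≤ n →
      ∀ (Ω : Type) [MeasurableSpace Ω] (P : Measure Ω) [IsProbabilityMeasure P]
        (X : ℕ → Ω → ℝ),
        (∀ i, Measurable (X i)) →
        iIndepFun X P →
        (∀ i, IdentDistrib (X i) (X 0) P P) →
        (∀ i, ∀ᵐ ω ∂P, X i ω ≤ Real.log n) →
        (∀ i, P {ω | -(3 / 2) * Real.log n ≤ X i ω} ≤ 1 / 2) →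
        P {ω | ∃ k : ℕ, t₀ < k ∧ -2 < ∑ i ∈ Finset.range k, X i ω} ≤
          ENNReal.ofReal (Real.exp (-1)) := by
  refine ⟨9999, ?_⟩
  intro n hn Ω mΩ P hP X hmeas hindep _ hbound htail
  have hlog2 : (0.6931471803 : ℝ) < Real.log 2 := Real.log_two_gt_d9
  have hL23 : (2:ℝ)/3 ≤ Real.log n := by
    have h2 : Real.log 2 ≤ Real.log n := Real.log_le_log (by norm_num) hn
    linarith
  have hL0 : 0 < Real.log n := by linarith
  set L := Real.log n with hLdef
  have hl110 : 0 < Real.log (11/10) := Real.log_pos (by norm_num)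
  set t : ℝ := 2 * Real.log (11/10) / L with htdef
  have ht0 : 0 ≤ t := by positivity
  have htL : t * L = 2 * Real.log (11/10) := div_mul_cancel₀ _ (ne_of_gt hL0)
  -- exp values
  have hexp1 : Real.exp (t * L) = 121/100 := by
    rw [htL, show (2:ℝ) * Real.log (11/10) = (2:ℕ) * Real.log (11/10) by norm_num,
      Real.exp_nat_mul, Real.exp_log (by norm_num)]
    norm_num
  have hexp2 : Real.exp (t * (-(3/2) * L)) = 1000/1331 := by
    have : t * (-(3/2) * L) = -((3:ℕ) * Real.log (11/10)) := by
      have : t * (-(3/2) * L) = -(3/2) * (t * L) := by ring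
      rw [this, htL]; push_cast; ring
    rw [this, Real.exp_neg, Real.exp_nat_mul, Real.exp_log (by norm_num)]
    norm_num
  -- a.e. bound on exp(t * X i)
  have haebd : ∀ i, ∀ᵐ ω ∂P, Real.exp (t * X i ω) ≤ 121/100 := by
    intro i
    filter_upwards [hbound i] with ω hω
    rw [← hexp1]
    exact Real.exp_le_exp.2 (mul_le_mul_of_nonneg_left hω ht0)
  -- integrability
  have hint : ∀ i, Integrable (fun ω => Real.exp (t * X i ω)) P := by
    intro i
    have hm : AEStronglyMeasurable (fun ω => Real.exp (t * X i ω)) P :=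
      (((hmeas i).const_mul t).exp).aestronglyMeasurable
    refine (integrable_const (121/100 : ℝ)).mono' hm ?_
    filter_upwards [haebd i] with ω hω
    rw [Real.norm_eq_abs, abs_of_pos (Real.exp_pos _)]
    exact hω
  -- mgf bound for each i
  have hG : ∀ i, mgf (X i) P t ≤ 261051/266200 := by
    intro i
    set B := {ω | -(3 / 2) * L ≤ X i ω} with hBdef
    have hBm : MeasurableSet B := measurableSet_le measurable_const (hmeas i)
    have hsplit : mgf (X i) P t
        = (∫ ω in B, Real.exp (t * X i ω) ∂P) + ∫ ω in Bᶜ, Real.exp (t * X i ω) ∂P := by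
      rw [mgf, ← integral_add_compl hBm (hint i)]
    have hB1 : ∫ ω in B, Real.exp (t * X i ω) ∂P ≤ (P B).toReal * (121/100) := by
      calc ∫ ω in B, Real.exp (t * X i ω) ∂P
          ≤ ∫ _ in B, (121/100 : ℝ) ∂P :=
            setIntegral_mono_ae (hint i).integrableOn
              (integrable_const _).integrableOn (haebd i)
        _ = (P B).toReal * (121/100) := by rw [setIntegral_const]; simp [smul_eq_mul, Measure.real]
    have hB2 : ∫ ω in Bᶜ, Real.exp (t * X i ω) ∂P ≤ (P Bᶜ).toReal * (1000/1331) := by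
      calc ∫ ω in Bᶜ, Real.exp (t * X i ω) ∂P
          ≤ ∫ _ in Bᶜ, (1000/1331 : ℝ) ∂P := by
            refine setIntegral_mono_on (hint i).integrableOn
              (integrable_const _).integrableOn hBm.compl ?_
            intro ω hω
            rw [← hexp2]
            refine Real.exp_le_exp.2 (mul_le_mul_of_nonneg_left ?_ ht0)
            have : ¬ (-(3 / 2) * Real.log n ≤ X i ω) := hω
            linarith [not_le.mp this]
        _ = (P Bᶜ).toReal * (1000/1331) := by rw [setIntegral_const]; simp [smul_eq_mul, Measure.real]
    have hsum1 : (P B).toReal + (P Bᶜ).toReal = 1 := by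
      rw [← ENNReal.toReal_add (measure_ne_top _ _) (measure_ne_top _ _),
        prob_add_prob_compl hBm, ENNReal.toReal_one]
    have hpB : (P B).toReal ≤ 1/2 := by
      have h := ENNReal.toReal_mono (by norm_num : (1/2 : ENNReal) ≠ ⊤) (htail i)
      calc (P B).toReal ≤ (1/2 : ENNReal).toReal := h
        _ = 1/2 := by norm_num
    have hpB0 : 0 ≤ (P B).toReal := ENNReal.toReal_nonneg
    rw [hsplit]
    nlinarith [hB1, hB2]
  -- per-k Chernoff bound
  have hker : ∀ k : ℕ, P {ω | -2 < ∑ i ∈ Finset.range k, X i ω}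
      ≤ ENNReal.ofReal ((11/10)^6 * (261051/266200)^k) := by
    intro k
    have hintS : Integrable (fun ω => Real.exp (t * (∑ i ∈ Finset.range k, X i) ω)) P :=
      hindep.integrable_exp_mul_sum hmeas (fun i _ => hint i)
    have hchern := measure_ge_le_exp_mul_mgf (X := ∑ i ∈ Finset.range k, X i) (μ := P)
      (-2 : ℝ) ht0 hintS
    have hmgfS : mgf (∑ i ∈ Finset.range k, X i) P t ≤ (261051/266200)^k := by
      rw [hindep.mgf_sum hmeas (Finset.range k)]
      calc ∏ i ∈ Finset.range k, mgf (X i) P t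
          ≤ ∏ _i ∈ Finset.range k, (261051/266200 : ℝ) :=
            Finset.prod_le_prod (fun i _ => mgf_nonneg) (fun i _ => hG i)
        _ = (261051/266200 : ℝ)^k := by rw [Finset.prod_const, Finset.card_range]
    have hexp2t : Real.exp (-t * (-2)) ≤ (11/10)^6 := by
      have h1 : -t * (-2) ≤ (6:ℕ) * Real.log (11/10) := by
        push_cast
        rw [show -t * (-2) = 4 * Real.log (11/10) / L by rw [htdef]; ring]
        rw [div_le_iff₀ hL0]
        nlinarith
      calc Real.exp (-t * (-2)) ≤ Real.exp ((6:ℕ) * Real.log (11/10)) := Real.exp_le_exp.2 h1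
        _ = (11/10)^6 := by rw [Real.exp_nat_mul, Real.exp_log (by norm_num)]
    calc P {ω | -2 < ∑ i ∈ Finset.range k, X i ω}
        ≤ P {ω | (-2:ℝ) ≤ (∑ i ∈ Finset.range k, X i) ω} := by
          refine measure_mono fun ω hω => ?_
          simp only [Set.mem_setOf_eq, Finset.sum_apply] at hω ⊢
          exact le_of_lt hω
      _ = ENNReal.ofReal ((P {ω | (-2:ℝ) ≤ (∑ i ∈ Finset.range k, X i) ω}).toReal) :=
          (ENNReal.ofReal_toReal (measure_ne_top _ _)).symm
      _ ≤ ENNReal.ofReal ((11/10)^6 * (261051/266200)^k) := by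
          refine ENNReal.ofReal_le_ofReal ?_
          calc (P {ω | (-2:ℝ) ≤ (∑ i ∈ Finset.range k, X i) ω}).toReal
              ≤ Real.exp (-t * (-2)) * mgf (∑ i ∈ Finset.range k, X i) P t := hchern
            _ ≤ (11/10)^6 * (261051/266200)^k := by
                have h0 : 0 ≤ mgf (∑ i ∈ Finset.range k, X i) P t := mgf_nonneg
                have h1 : (0:ℝ) ≤ Real.exp (-t * (-2)) := (Real.exp_pos _).le
                nlinarith [pow_nonneg (by norm_num : (0:ℝ) ≤ 261051/266200) k]
    -- end hker
  -- union bound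
  set E₀ : ℝ := (11/10)^6 * (991/1000)^10000 with hE₀
  have hE₀0 : 0 ≤ E₀ := by positivity
  clear_value E₀
  have hsetu : {ω | ∃ k : ℕ, 9999 < k ∧ -2 < ∑ i ∈ Finset.range k, X i ω}
      = ⋃ k : ℕ, {ω | 9999 < k ∧ -2 < ∑ i ∈ Finset.range k, X i ω} := by
    ext ω; simp [Set.mem_iUnion]
  have hterm : ∀ k : ℕ, P {ω | 9999 < k ∧ -2 < ∑ i ∈ Finset.range k, X i ω}
      ≤ ENNReal.ofReal E₀ * ENNReal.ofReal (99/100) ^ k := by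
    intro k
    by_cases h : 9999 < k
    · have hsub : {ω | 9999 < k ∧ -2 < ∑ i ∈ Finset.range k, X i ω}
          ⊆ {ω | -2 < ∑ i ∈ Finset.range k, X i ω} := fun ω hω => hω.2
      refine le_trans (le_trans (measure_mono hsub) (hker k)) ?_
      rw [← ENNReal.ofReal_pow (by norm_num), ← ENNReal.ofReal_mul hE₀0]
      refine ENNReal.ofReal_le_ofReal ?_
      have hk10 : 10000 ≤ k := h
      have hGk : (261051/266200 : ℝ)^k ≤ (991/1000)^10000 * (99/100)^k := by
        calc (261051/266200 : ℝ)^k ≤ ((991/1000) * (99/100))^k :=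
              pow_le_pow_left₀ (by norm_num) (by norm_num) k
          _ = (991/1000:ℝ)^k * (99/100)^k := mul_pow _ _ _
          _ ≤ (991/1000:ℝ)^10000 * (99/100)^k := by
              refine mul_le_mul_of_nonneg_right ?_ (by positivity)
              exact pow_le_pow_of_le_one (by norm_num) (by norm_num) hk10
      calc (11/10:ℝ)^6 * (261051/266200)^k
          ≤ (11/10:ℝ)^6 * ((991/1000)^10000 * (99/100)^k) := by
            refine mul_le_mul_of_nonneg_left hGk (by positivity)
        _ = E₀ * (99/100)^k := by rw [hE₀]; ring
    · have : {ω | 9999 < k ∧ -2 < ∑ i ∈ Finset.range k, X i ω} = ∅ := by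
        ext ω; simp [h]
      rw [this, measure_empty]
      exact zero_le
  have hfin : ENNReal.ofReal E₀ * (1 - ENNReal.ofReal (99/100))⁻¹
      ≤ ENNReal.ofReal (Real.exp (-1)) := by
    have h1 : (1 : ENNReal) - ENNReal.ofReal (99/100) = ENNReal.ofReal (1/100) := by
      rw [← ENNReal.ofReal_one, ← ENNReal.ofReal_sub _ (by norm_num)]
      norm_num
    rw [h1, ← ENNReal.ofReal_inv_of_pos (by norm_num), ← ENNReal.ofReal_mul hE₀0]
    refine ENNReal.ofReal_le_ofReal ?_
    have hnum : 300 * E₀ ≤ 1 := by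
      have h1 : (1:ℝ) + 1000 * (9/991) ≤ (1 + 9/991) ^ 1000 := one_add_mul_le_pow (by norm_num) 1000
      have h2 : (9991/991:ℝ) ≤ (1000/991) ^ 1000 := by
        calc (9991/991:ℝ) = 1 + 1000 * (9/991) := by norm_num
          _ ≤ (1 + 9/991) ^ 1000 := h1
          _ = (1000/991:ℝ) ^ 1000 := by norm_num
      have h3 : (991/1000:ℝ)^1000 ≤ 991/9991 := by
        rw [show (991/1000:ℝ) = ((1000/991:ℝ))⁻¹ by norm_num, inv_pow]
        rw [show (991/9991:ℝ) = ((9991/991:ℝ))⁻¹ by norm_num]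
        exact inv_anti₀ (by norm_num) h2
      have h4 : (991/1000:ℝ)^10000 ≤ (991/9991)^10 := by
        calc (991/1000:ℝ)^10000 = ((991/1000:ℝ)^1000)^10 := by rw [← pow_mul]
          _ ≤ (991/9991:ℝ)^10 := pow_le_pow_left₀ (by positivity) h3 10
      rw [hE₀]
      calc (300:ℝ) * ((11/10)^6 * (991/1000)^10000) ≤ 300 * ((11/10)^6 * (991/9991)^10) := by gcongr
        _ ≤ 1 := by norm_num
    have hexpinv : (1/3 : ℝ) ≤ Real.exp (-1) := by
      rw [Real.exp_neg]
      have h := Real.exp_one_lt_d9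
      rw [show (1:ℝ)/3 = (3:ℝ)⁻¹ by norm_num]
      exact inv_anti₀ (Real.exp_pos 1) (by linarith)
    calc E₀ * (1/100:ℝ)⁻¹ = 100 * E₀ := by rw [inv_div, div_one, mul_comm]
      _ ≤ 1/3 := by linarith
      _ ≤ Real.exp (-1) := hexpinv
  calc P {ω | ∃ k : ℕ, 9999 < k ∧ -2 < ∑ i ∈ Finset.range k, X i ω}
      ≤ ∑' k : ℕ, P {ω | 9999 < k ∧ -2 < ∑ i ∈ Finset.range k, X i ω} := by
        rw [hsetu]; exact measure_iUnion_le _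
    _ ≤ ∑' k : ℕ, ENNReal.ofReal E₀ * ENNReal.ofReal (99/100) ^ k :=
        ENNReal.tsum_le_tsum hterm
    _ = ENNReal.ofReal E₀ * (1 - ENNReal.ofReal (99/100))⁻¹ := by
        rw [ENNReal.tsum_mul_left, ENNReal.tsum_geometric]
    _ ≤ ENNReal.ofReal (Real.exp (-1)) := hfin
end

section
/- Let n = n₁ + n₂ with 1 ≤ n₁ ≤ n₂, and let x^(0) ∈ ℝ^n be the vector equal to 1 on coordinates 1, ..., n₁ and equal to -n₁/n₂ on coordinates n₁+1, ..., n. Let x^(K) be obtained from x^(0) by any finite sequence of pairwise convex updates, and suppose exactly ν of these updates involve one index in {1,...,n₁} and one index in {n₁+1,...,n}. Then the mean of x^(K) over the first n₁ coordinates, y = (Σ_{i=1}^{n₁} x^(K)_i)/n₁, satisfies y ≥ 1 - 2ν/n₁. -/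
open scoped BigOperators

/-- A pairwise convex update on a vector `x` with indices `i ≠ j` and coefficient `α`:
`x i` is replaced by `α·x i + (1-α)·x j`, `x j` by `α·x j + (1-α)·x i`, and all other
coordinates are unchanged. -/
def convexUpdate (x : ℕ → ℝ) (i j : ℕ) (α : ℝ) : ℕ → ℝ :=
  fun l =>
    if l = i then α * x i + (1 - α) * x j
    else if l = j then α * x j + (1 - α) * x i
    else x l

lemma sum_diff_two (s : Finset ℕ) (f g : ℕ → ℝ) (i j : ℕ) (hij : i ≠ j)
    (h : ∀ l ∈ s, l ≠ i → l ≠ j → f l = g l) :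
    ∑ l ∈ s, f l = ∑ l ∈ s, g l + ((if i ∈ s then f i - g i else 0) +
      (if j ∈ s then f j - g j else 0)) := by
  have key : ∑ l ∈ s, (f l - g l)
      = ∑ l ∈ s, ((if l = i then f i - g i else 0) + (if l = j then f j - g j else 0)) := by
    refine Finset.sum_congr rfl ?_
    intro l hl
    by_cases h1 : l = i
    · subst h1; simp [hij]
    · by_cases h2 : l = j
      · subst h2; simp [h1]
      · simp [h1, h2, h l hl h1 h2]
  rw [Finset.sum_add_distrib, Finset.sum_ite_eq' s i, Finset.sum_ite_eq' s j] at key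
  rw [Finset.sum_sub_distrib] at key
  linarith

/-- Start from the vector that is `1` on the first `n₁` coordinates and
`-n₁/n₂` on the remaining `n₂` coordinates (`1 ≤ n₁ ≤ n₂`). After any finite sequence of
pairwise convex updates, of which exactly `ν` are cross updates (one index in each group),
the mean `y` of the first `n₁` coordinates satisfies `y ≥ 1 - 2ν/n₁`. -/
theorem group_mean_lower_bound_convex_updates
    (n₁ n₂ K : ℕ) (h1 : 1 ≤ n₁) (h12 : n₁ ≤ n₂)
    (x : ℕ → ℕ → ℝ) (i j : ℕ → ℕ) (α : ℕ → ℝ)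
    (hx0 : ∀ l < n₁ + n₂, x 0 l = if l < n₁ then (1 : ℝ) else -((n₁ : ℝ) / n₂))
    (hstep : ∀ k < K, i k < n₁ + n₂ ∧ j k < n₁ + n₂ ∧ i k ≠ j k ∧
      α k ∈ Set.Icc (0 : ℝ) 1 ∧ x (k + 1) = convexUpdate (x k) (i k) (j k) (α k))
    (ν : ℕ)
    (hν : ν = ((Finset.range K).filter
      (fun k => (i k < n₁ ∧ ¬ j k < n₁) ∨ (¬ i k < n₁ ∧ j k < n₁))).card) :
    (∑ l ∈ Finset.range n₁, x K l) / n₁ ≥ 1 - 2 * ν / n₁ := by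
  have hn2 : (0:ℝ) < (n₂ : ℝ) := by
    exact_mod_cast Nat.lt_of_lt_of_le h1 h12
  have hn1 : (0:ℝ) < (n₁ : ℝ) := by exact_mod_cast h1
  -- all coordinates stay in [-1, 1]
  have hbound : ∀ k, k ≤ K → ∀ l, l < n₁ + n₂ → -1 ≤ x k l ∧ x k l ≤ 1 := by
    intro k
    induction k with
    | zero =>
      intro _ l hl
      rw [hx0 l hl]
      split
      · constructor <;> norm_num
      · have h1' : (n₁ : ℝ) / n₂ ≤ 1 := by
          rw [div_le_one hn2]; exact_mod_cast h12
        have h2' : (0:ℝ) ≤ (n₁ : ℝ) / n₂ := by positivity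
        constructor <;> linarith
    | succ k ih =>
      intro hk l hl
      obtain ⟨hi, hj, hne, ⟨hα0, hα1⟩, hupd⟩ := hstep k (by omega)
      have ihk := ih (by omega)
      obtain ⟨hi1, hi2⟩ := ihk (i k) hi
      obtain ⟨hj1, hj2⟩ := ihk (j k) hj
      rw [hupd]
      unfold convexUpdate
      split_ifs with h1' h2'
      · constructor <;> nlinarith
      · constructor <;> nlinarith
      · exact ihk l hl
  set P : ℕ → Prop := fun k => (i k < n₁ ∧ ¬ j k < n₁) ∨ (¬ i k < n₁ ∧ j k < n₁) with hP
  -- key invariant on the partial sums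
  have hsum : ∀ k, k ≤ K → (n₁ : ℝ) - 2 * ((Finset.range k).filter P).card
      ≤ ∑ l ∈ Finset.range n₁, x k l := by
    intro k
    induction k with
    | zero =>
      intro _
      simp only [Finset.range_zero, Finset.filter_empty, Finset.card_empty, Nat.cast_zero,
        mul_zero, sub_zero]
      have : ∑ l ∈ Finset.range n₁, x 0 l = ∑ l ∈ Finset.range n₁, (1:ℝ) := by
        refine Finset.sum_congr rfl ?_
        intro l hl
        rw [Finset.mem_range] at hl
        rw [hx0 l (by omega)]
        simp [hl]
      rw [this, Finset.sum_const, Finset.card_range]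
      simp
    | succ k ih =>
      intro hk
      have ihk := ih (by omega)
      obtain ⟨hi, hj, hne, ⟨hα0, hα1⟩, hupd⟩ := hstep k (by omega)
      obtain ⟨hi1, hi2⟩ := hbound k (by omega) (i k) hi
      obtain ⟨hj1, hj2⟩ := hbound k (by omega) (j k) hj
      have hsd := sum_diff_two (Finset.range n₁) (x (k+1)) (x k) (i k) (j k) hne
        (by
          intro l _ h1' h2'
          rw [hupd]
          unfold convexUpdate
          simp [h1', h2'])
      have hfi : i k ∈ Finset.range n₁ → x (k+1) (i k) - x k (i k)
          = (1 - α k) * (x k (j k) - x k (i k)) := by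
        intro _
        rw [hupd]; unfold convexUpdate; rw [if_pos rfl]; ring
      have hfj : j k ∈ Finset.range n₁ → x (k+1) (j k) - x k (j k)
          = (1 - α k) * (x k (i k) - x k (j k)) := by
        intro _
        rw [hupd]; unfold convexUpdate
        rw [if_neg (Ne.symm hne), if_pos rfl]; ring
      have hcard : (((Finset.range (k+1)).filter P).card : ℝ)
          = ((Finset.range k).filter P).card + (if P k then 1 else 0) := by
        rw [Finset.range_add_one, Finset.filter_insert]
        split_ifs with hpk
        · rw [Finset.card_insert_of_notMem (by simp)]; push_cast; ring
        · simp
      rw [hsd, hcard]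
      simp only [Finset.mem_range]
      by_cases hik : i k < n₁ <;> by_cases hjk : j k < n₁
      · have hPk : ¬ P k := by simp [hP, hik, hjk]
        rw [if_pos hik, if_pos hjk, if_neg hPk, hfi (Finset.mem_range.mpr hik),
          hfj (Finset.mem_range.mpr hjk)]
        push_cast
        nlinarith
      · have hPk : P k := Or.inl ⟨hik, hjk⟩
        rw [if_pos hik, if_neg hjk, if_pos hPk, hfi (Finset.mem_range.mpr hik)]
        push_cast
        nlinarith
      · have hPk : P k := Or.inr ⟨hik, hjk⟩
        rw [if_neg hik, if_pos hjk, if_pos hPk, hfj (Finset.mem_range.mpr hjk)]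
        push_cast
        nlinarith
      · have hPk : ¬ P k := by simp [hP, hik, hjk]
        rw [if_neg hik, if_neg hjk, if_neg hPk]
        push_cast
        nlinarith
  have hfin := hsum K le_rfl
  rw [hν]
  rw [ge_iff_le]
  rw [show (1:ℝ) - 2 * (((Finset.range K).filter P).card : ℝ) / n₁
      = ((n₁ : ℝ) - 2 * ((Finset.range K).filter P).card) / n₁ by field_simp]
  exact div_le_div_of_nonneg_right hfin hn1.le
end

section
/- Let n = n₁ + n₂ with 1 ≤ n₁ ≤ n₂, and let x^(0) ∈ ℝ^n be the vector equal to 1 on coordinates 1, ..., n₁ and equal to -n₁/n₂ on coordinates n₁+1, ..., n (so Σ x^(0)_i = 0 and its variance is (1/n)Σ (x^(0)_i)² = n₁/n₂). Let x^(K) be obtained from x^(0) by a finite sequence of pairwise convex updates, exactly ν of which involve one index in {1,...,n₁} and one index in {n₁+1,...,n}. If the variance of x^(K) satisfies (1/n)·Σ_{i=1}^n (x^(K)_i)² ≤ (1/e²)·(n₁/n₂), then ν ≥ (1 - √2/e)·n₁/2. -/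
open scoped BigOperators

set_option maxHeartbeats 1600000 in
/-- Start from the vector that is `1` on the first `n₁` coordinates and
`-n₁/n₂` on the remaining `n₂` coordinates (`1 ≤ n₁ ≤ n₂`), which has zero sum and variance
`n₁/n₂`. If after a finite sequence of pairwise convex updates, of which exactly `ν` are
cross updates, the variance has dropped to at most `(1/e²)·(n₁/n₂)`, then
`ν ≥ (1 - √2/e)·n₁/2`. -/
theorem convex_updates_variance_drop_needs_many_cross_updates
    (n₁ n₂ K : ℕ) (h1 : 1 ≤ n₁) (h12 : n₁ ≤ n₂)
    (x : ℕ → ℕ → ℝ) (i j : ℕ → ℕ) (α : ℕ → ℝ)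
    (hx0 : ∀ l < n₁ + n₂, x 0 l = if l < n₁ then (1 : ℝ) else -((n₁ : ℝ) / n₂))
    (hstep : ∀ k < K, i k < n₁ + n₂ ∧ j k < n₁ + n₂ ∧ i k ≠ j k ∧
      α k ∈ Set.Icc (0 : ℝ) 1 ∧ x (k + 1) = convexUpdate (x k) (i k) (j k) (α k))
    (ν : ℕ)
    (hν : ν = ((Finset.range K).filter
      (fun k => (i k < n₁ ∧ ¬ j k < n₁) ∨ (¬ i k < n₁ ∧ j k < n₁))).card)
    (hvar : (∑ l ∈ Finset.range (n₁ + n₂), (x K l) ^ 2) / (n₁ + n₂) ≤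
      (1 / Real.exp 1 ^ 2) * ((n₁ : ℝ) / n₂)) :
    (ν : ℝ) ≥ (1 - Real.sqrt 2 / Real.exp 1) * n₁ / 2 := by
  have hn2pos : 0 < n₂ := lt_of_lt_of_le h1 h12
  have hn2R : (0:ℝ) < (n₂:ℝ) := by exact_mod_cast hn2pos
  have hn1R : (0:ℝ) < (n₁:ℝ) := by exact_mod_cast h1
  have h12R : (n₁:ℝ) ≤ (n₂:ℝ) := by exact_mod_cast h12
  have hratio : (n₁:ℝ)/n₂ ≤ 1 := by rw [div_le_one hn2R]; exact h12R
  have hratio0 : (0:ℝ) ≤ (n₁:ℝ)/n₂ := by positivity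
  -- all coordinates stay in [-(n₁/n₂), 1]
  have hbdd : ∀ k, k ≤ K → ∀ l, l < n₁ + n₂ →
      -((n₁:ℝ)/n₂) ≤ x k l ∧ x k l ≤ 1 := by
    intro k
    induction k with
    | zero =>
      intro _ l hl
      rw [hx0 l hl]
      split <;> constructor <;> linarith
    | succ k ih =>
      intro hk l hl
      have hkK : k < K := hk
      obtain ⟨hi, hj, hij, hα, hxs⟩ := hstep k hkK
      have ihk := ih (le_of_lt hkK)
      obtain ⟨ha0, ha1⟩ := hα
      have Hi := ihk (i k) hi
      have Hj := ihk (j k) hj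
      rw [hxs]
      unfold convexUpdate
      split_ifs with hli hlj
      · constructor <;> nlinarith [Hi.1, Hi.2, Hj.1, Hj.2]
      · constructor <;> nlinarith [Hi.1, Hi.2, Hj.1, Hj.2]
      · exact ihk l hl
  set S : ℕ → ℝ := fun k => ∑ l ∈ Finset.range n₁, x k l with hS
  -- pointwise change per step
  have hpt : ∀ k, k < K → ∀ l, x (k+1) l - x k l =
      (if l = i k then (1 - α k) * (x k (j k) - x k (i k)) else 0)
    + (if l = j k then (1 - α k) * (x k (i k) - x k (j k)) else 0) := by
    intro k hk l
    obtain ⟨hi, hj, hij, hα, hxs⟩ := hstep k hk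
    rw [hxs]
    unfold convexUpdate
    by_cases h1' : l = i k
    · subst h1'; simp [hij]; ring
    · by_cases h2' : l = j k
      · subst h2'; simp [h1', (Ne.symm hij)]; ring
      · simp [h1', h2']
  have hSdiff : ∀ k, k < K → S (k+1) - S k =
      (if i k < n₁ then (1 - α k) * (x k (j k) - x k (i k)) else 0)
    + (if j k < n₁ then (1 - α k) * (x k (i k) - x k (j k)) else 0) := by
    intro k hk
    have h1s : S (k+1) - S k = ∑ l ∈ Finset.range n₁, (x (k+1) l - x k l) := by
      rw [Finset.sum_sub_distrib]
    rw [h1s]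
    calc ∑ l ∈ Finset.range n₁, (x (k+1) l - x k l)
        = ∑ l ∈ Finset.range n₁,
          ((if l = i k then (1 - α k) * (x k (j k) - x k (i k)) else 0)
         + (if l = j k then (1 - α k) * (x k (i k) - x k (j k)) else 0)) := by
          exact Finset.sum_congr rfl fun l _ => hpt k hk l
      _ = _ := by
          rw [Finset.sum_add_distrib, Finset.sum_ite_eq' (Finset.range n₁),
            Finset.sum_ite_eq' (Finset.range n₁)]
          simp [Finset.mem_range]
  -- per-step bound
  have hdiff : ∀ k, k < K → |S (k+1) - S k| ≤
      (if (i k < n₁ ∧ ¬ j k < n₁) ∨ (¬ i k < n₁ ∧ j k < n₁) then (2:ℝ) else 0) := by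
    intro k hk
    obtain ⟨hi, hj, hij, hα, hxs⟩ := hstep k hk
    obtain ⟨ha0, ha1⟩ := hα
    have Hi := hbdd k (le_of_lt hk) (i k) hi
    have Hj := hbdd k (le_of_lt hk) (j k) hj
    rw [hSdiff k hk]
    have habs1 : |(1 - α k) * (x k (j k) - x k (i k))| ≤ 2 := by
      rw [abs_mul]
      have h2 : |x k (j k) - x k (i k)| ≤ 2 := by
        rw [abs_le]
        constructor <;> linarith [Hi.1, Hi.2, Hj.1, Hj.2, hratio]
      have h3 : |1 - α k| ≤ 1 := by rw [abs_le]; constructor <;> linarith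
      calc |1 - α k| * |x k (j k) - x k (i k)| ≤ 1 * 2 :=
            mul_le_mul h3 h2 (abs_nonneg _) (by norm_num)
        _ = 2 := by norm_num
    have habs2 : |(1 - α k) * (x k (i k) - x k (j k))| ≤ 2 := by
      rw [show x k (i k) - x k (j k) = -(x k (j k) - x k (i k)) by ring, mul_neg, abs_neg]
      exact habs1
    by_cases hi1 : i k < n₁ <;> by_cases hj1 : j k < n₁
    · simp only [hi1, hj1, if_pos, if_neg]
      have : (1 - α k) * (x k (j k) - x k (i k)) + (1 - α k) * (x k (i k) - x k (j k)) = 0 := by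
        ring
      simp [this, hi1, hj1]
    · simp only [if_pos hi1, if_neg hj1, add_zero]
      simp only [hi1, hj1, true_and, not_false_iff, or_false]
      simpa using habs1
    · simp only [if_neg hi1, if_pos hj1, zero_add]
      simp only [hi1, hj1, not_false_iff, and_true, false_and, true_or, or_true]
      simpa using habs2
    · simp [hi1, hj1]
  -- telescoping
  have htel : S K - S 0 = ∑ k ∈ Finset.range K, (S (k+1) - S k) :=
    (Finset.sum_range_sub (fun k => S k) K).symm
  have hsum_bound : |S K - S 0| ≤ 2 * (ν : ℝ) := by
    rw [htel]
    calc |∑ k ∈ Finset.range K, (S (k+1) - S k)|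
        ≤ ∑ k ∈ Finset.range K, |S (k+1) - S k| := Finset.abs_sum_le_sum_abs _ _
      _ ≤ ∑ k ∈ Finset.range K,
          (if (i k < n₁ ∧ ¬ j k < n₁) ∨ (¬ i k < n₁ ∧ j k < n₁) then (2:ℝ) else 0) :=
          Finset.sum_le_sum fun k hk => hdiff k (Finset.mem_range.mp hk)
      _ = 2 * (ν : ℝ) := by
          rw [Finset.sum_ite, Finset.sum_const, Finset.sum_const, hν]
          simp [mul_comm]
  -- initial sum
  have hS0 : S 0 = (n₁:ℝ) := by
    have : ∀ l ∈ Finset.range n₁, x 0 l = 1 := by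
      intro l hl
      have hl1 := Finset.mem_range.mp hl
      rw [hx0 l (lt_of_lt_of_le hl1 (Nat.le_add_right _ _))]
      simp [hl1]
    have h0 : S 0 = ∑ l ∈ Finset.range n₁, x 0 l := rfl
    rw [h0, Finset.sum_congr rfl this, Finset.sum_const]
    simp
  -- final sum small by Cauchy–Schwarz
  have hnposR : (0:ℝ) < (n₁:ℝ) + (n₂:ℝ) := by positivity
  have hsumsq : ∑ l ∈ Finset.range (n₁ + n₂), (x K l)^2 ≤
      (1 / Real.exp 1 ^ 2) * ((n₁:ℝ)/n₂) * ((n₁:ℝ) + n₂) := by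
    rw [div_le_iff₀ hnposR] at hvar
    push_cast at hvar ⊢
    linarith
  have hsq1 : ∑ l ∈ Finset.range n₁, (x K l)^2 ≤
      ∑ l ∈ Finset.range (n₁ + n₂), (x K l)^2 := by
    apply Finset.sum_le_sum_of_subset_of_nonneg
    · exact Finset.range_subset_range.mpr (Nat.le_add_right _ _)
    · intro l _ _; positivity
  have hCS : (S K)^2 ≤ (n₁:ℝ) * ∑ l ∈ Finset.range n₁, (x K l)^2 := by
    have := sq_sum_le_card_mul_sum_sq (s := Finset.range n₁) (f := x K)
    simpa using this
  have hE : (0:ℝ) < Real.exp 1 := Real.exp_pos 1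
  have hsqrt2 : Real.sqrt 2 ^ 2 = 2 := Real.sq_sqrt (by norm_num)
  have hsqrt2pos : (0:ℝ) ≤ Real.sqrt 2 := Real.sqrt_nonneg 2
  have hSK2 : (S K)^2 ≤ 2 * (n₁:ℝ)^2 / Real.exp 1 ^ 2 := by
    have hstep1 : (S K)^2 ≤ (n₁:ℝ) * ((1 / Real.exp 1 ^ 2) * ((n₁:ℝ)/n₂) * ((n₁:ℝ) + n₂)) := by
      calc (S K)^2 ≤ (n₁:ℝ) * ∑ l ∈ Finset.range n₁, (x K l)^2 := hCS
        _ ≤ (n₁:ℝ) * ((1 / Real.exp 1 ^ 2) * ((n₁:ℝ)/n₂) * ((n₁:ℝ) + n₂)) := by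
            apply mul_le_mul_of_nonneg_left _ (le_of_lt hn1R)
            exact le_trans hsq1 hsumsq
    have hkey : (n₁:ℝ) * ((1 / Real.exp 1 ^ 2) * ((n₁:ℝ)/n₂) * ((n₁:ℝ) + n₂)) ≤
        2 * (n₁:ℝ)^2 / Real.exp 1 ^ 2 := by
      have h2 : (n₁:ℝ)/n₂ * ((n₁:ℝ)+n₂) ≤ 2*(n₁:ℝ) := by
        rw [div_mul_eq_mul_div, div_le_iff₀ hn2R]
        nlinarith [mul_le_mul_of_nonneg_left h12R hn1R.le]
      calc (n₁:ℝ) * ((1 / Real.exp 1 ^ 2) * ((n₁:ℝ)/n₂) * ((n₁:ℝ) + n₂))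
          = (1 / Real.exp 1 ^ 2) * ((n₁:ℝ) * ((n₁:ℝ)/n₂ * ((n₁:ℝ)+n₂))) := by ring
        _ ≤ (1 / Real.exp 1 ^ 2) * ((n₁:ℝ) * (2*(n₁:ℝ))) := by
            gcongr
        _ = 2 * (n₁:ℝ)^2 / Real.exp 1 ^ 2 := by ring
    linarith
  have hSKle : S K ≤ Real.sqrt 2 * (n₁:ℝ) / Real.exp 1 := by
    set t := Real.sqrt 2 * (n₁:ℝ) / Real.exp 1 with ht
    have ht0 : 0 ≤ t := by positivity
    have ht2 : t^2 = 2 * (n₁:ℝ)^2 / Real.exp 1 ^ 2 := by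
      rw [ht, div_pow, mul_pow, hsqrt2]
    have hSt : (S K)^2 ≤ t^2 := by rw [ht2]; exact hSK2
    nlinarith [hSt, ht0, sq_nonneg (S K + t), sq_nonneg (S K - t)]
  -- combine
  have hlow : (n₁:ℝ) - 2 * (ν:ℝ) ≤ S K := by
    have := abs_le.mp hsum_bound
    linarith [this.1, hS0 ▸ this.1]
  have hfin : (n₁:ℝ) - 2 * (ν:ℝ) ≤ Real.sqrt 2 * (n₁:ℝ) / Real.exp 1 :=
    le_trans hlow hSKle
  have : (1 - Real.sqrt 2 / Real.exp 1) * (n₁:ℝ) / 2 =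
      ((n₁:ℝ) - Real.sqrt 2 * (n₁:ℝ) / Real.exp 1) / 2 := by ring
  rw [ge_iff_le, this]
  linarith
end

section
/- Let n = n₁ + n₂ with 1 ≤ n₁ ≤ n₂, and let x ∈ ℝ^n with Σ_{i=1}^n x_i = 0. Let μ₁ = (Σ_{i=1}^{n₁} x_i)/n₁, μ₂ = (Σ_{i=n₁+1}^{n} x_i)/n₂, and σ = sqrt( ( Σ_{i=1}^{n₁} (x_i - μ₁)² + Σ_{i=n₁+1}^{n} (x_i - μ₂)² )/n ). Let y ∈ ℝ^n be obtained from x by the non-convex cut update: y_{n₁} = x_{n₁} + n₁·(x_{n₁+1} - x_{n₁}), y_{n₁+1} = x_{n₁+1} - n₁·(x_{n₁+1} - x_{n₁}), and y_i = x_i for all other i. Then the new group-1 mean μ₁' = (Σ_{i=1}^{n₁} y_i)/n₁ satisfies the identity μ₁' = μ₂ + (x_{n₁+1} - μ₂) - (x_{n₁} - μ₁), and consequently |μ₁' - μ₂| ≤ 2·√n·σ. -/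
open scoped BigOperators

/-- Zero-sum vector `x ∈ ℝⁿ`, `n = n₁ + n₂`, partitioned into the first
`n₁` coordinates (group 1, mean `μ₁`) and the last `n₂` coordinates (group 2, mean `μ₂`),
with within-group standard deviation `σ`.  Coordinates are indexed by `0, …, n-1`, so the
cut edge joins the last coordinate `n₁ - 1` of group 1 and the first coordinate `n₁` of
group 2.  The non-convex cut update moves `n₁` times their difference across the cut.  The
new group-1 mean `μ₁'` satisfies `μ₁' = μ₂ + (x_{n₁} - μ₂) - (x_{n₁-1} - μ₁)`, hence
`|μ₁' - μ₂| ≤ 2 √n · σ`. -/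
theorem nonconvex_cut_update_group_mean
    (n₁ n₂ : ℕ) (h1 : 1 ≤ n₁) (h12 : n₁ ≤ n₂)
    (x : ℕ → ℝ) (hsum : ∑ l ∈ Finset.range (n₁ + n₂), x l = 0)
    (μ₁ μ₂ σ : ℝ)
    (hμ₁ : μ₁ = (∑ l ∈ Finset.range n₁, x l) / n₁)
    (hμ₂ : μ₂ = (∑ l ∈ Finset.Ico n₁ (n₁ + n₂), x l) / n₂)
    (hσ : σ = Real.sqrt (((∑ l ∈ Finset.range n₁, (x l - μ₁) ^ 2) +
        ∑ l ∈ Finset.Ico n₁ (n₁ + n₂), (x l - μ₂) ^ 2) / (n₁ + n₂)))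
    (y : ℕ → ℝ)
    (hy : y = fun l =>
      if l = n₁ - 1 then x (n₁ - 1) + n₁ * (x n₁ - x (n₁ - 1))
      else if l = n₁ then x n₁ - n₁ * (x n₁ - x (n₁ - 1))
      else x l)
    (μ₁' : ℝ) (hμ₁' : μ₁' = (∑ l ∈ Finset.range n₁, y l) / n₁) :
    μ₁' = μ₂ + (x n₁ - μ₂) - (x (n₁ - 1) - μ₁) ∧
    |μ₁' - μ₂| ≤ 2 * Real.sqrt (n₁ + n₂) * σ := by
  have hn₁ : (n₁ : ℝ) ≠ 0 := Nat.cast_ne_zero.mpr (by omega)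
  have hnpos : (0:ℝ) < (n₁ + n₂ : ℕ) := by
    exact_mod_cast Nat.pos_of_ne_zero (by omega)
  -- sum of y over range n₁
  have key : ∑ l ∈ Finset.range n₁, (y l - x l) = n₁ * (x n₁ - x (n₁ - 1)) := by
    rw [Finset.sum_eq_single (n₁ - 1)]
    · simp [hy]
    · intro b hb hne
      have hb' : b ≠ n₁ := Nat.ne_of_lt (Finset.mem_range.mp hb)
      simp [hy, hne, hb']
    · intro h
      exact absurd (Finset.mem_range.mpr (by omega)) h
  have hsum_y : ∑ l ∈ Finset.range n₁, y l =
      (∑ l ∈ Finset.range n₁, x l) + n₁ * (x n₁ - x (n₁ - 1)) := by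
    have := Finset.sum_sub_distrib (f := y) (g := x) (s := Finset.range n₁)
    rw [this] at key
    linarith
  have hμ₁'eq : μ₁' = μ₁ + (x n₁ - x (n₁ - 1)) := by
    rw [hμ₁', hsum_y, hμ₁]
    field_simp
  refine ⟨by rw [hμ₁'eq]; ring, ?_⟩
  -- bound
  set S₁ := ∑ l ∈ Finset.range n₁, (x l - μ₁) ^ 2 with hS₁
  set S₂ := ∑ l ∈ Finset.Ico n₁ (n₁ + n₂), (x l - μ₂) ^ 2 with hS₂
  have hS₁0 : 0 ≤ S₁ := Finset.sum_nonneg fun i _ => sq_nonneg _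
  have hS₂0 : 0 ≤ S₂ := Finset.sum_nonneg fun i _ => sq_nonneg _
  have hσeq : Real.sqrt ((n₁ + n₂ : ℕ)) * σ = Real.sqrt (S₁ + S₂) := by
    rw [hσ, ← Real.sqrt_mul (le_of_lt hnpos)]
    congr 1
    field_simp
    push_cast; ring
  have h1b : (x (n₁ - 1) - μ₁) ^ 2 ≤ S₁ + S₂ := by
    have hmem : n₁ - 1 ∈ Finset.range n₁ := Finset.mem_range.mpr (by omega)
    have := Finset.single_le_sum (f := fun l => (x l - μ₁) ^ 2)
      (fun i _ => sq_nonneg _) hmem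
    linarith
  have h2b : (x n₁ - μ₂) ^ 2 ≤ S₁ + S₂ := by
    have hmem : n₁ ∈ Finset.Ico n₁ (n₁ + n₂) := Finset.mem_Ico.mpr ⟨le_refl _, by omega⟩
    have := Finset.single_le_sum (f := fun l => (x l - μ₂) ^ 2)
      (fun i _ => sq_nonneg _) hmem
    linarith
  have habs1 : |x (n₁ - 1) - μ₁| ≤ Real.sqrt (S₁ + S₂) := by
    rw [← Real.sqrt_sq_eq_abs]
    exact Real.sqrt_le_sqrt h1b
  have habs2 : |x n₁ - μ₂| ≤ Real.sqrt (S₁ + S₂) := by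
    rw [← Real.sqrt_sq_eq_abs]
    exact Real.sqrt_le_sqrt h2b
  have : |μ₁' - μ₂| ≤ |x n₁ - μ₂| + |x (n₁ - 1) - μ₁| := by
    have : μ₁' - μ₂ = (x n₁ - μ₂) - (x (n₁ - 1) - μ₁) := by rw [hμ₁'eq]; ring
    rw [this]
    exact abs_sub _ _
  calc |μ₁' - μ₂| ≤ |x n₁ - μ₂| + |x (n₁ - 1) - μ₁| := this
    _ ≤ Real.sqrt (S₁ + S₂) + Real.sqrt (S₁ + S₂) := add_le_add habs2 habs1
    _ = 2 * Real.sqrt (n₁ + n₂) * σ := by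
        rw [← hσeq]; push_cast; ring
end
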